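/- For every r ∈ [1,∞) there exists a compactly supported Borel probability measure μ on ℝ^q such that D̄_r(μ) ≠ dim_P^*(μ), i.e. the upper quantization dimension of order r does not coincide with the packing dimension of the measure. -/

import Mathlib

open MeasureTheory Filter Metric
open scoped ENNReal NNReal

/-- The `n`-th quantization error of order `r` for a measure `P`:
`e_{n,r}(P) = inf { (∫ d(x,α)^r dP)^{1/r} : α ⊆ E, 1 ≤ card α ≤ n }`. -/
noncomputable def quantError {E : Type*} [MetricSpace E] [MeasurableSpace E]
    (P : Measure E) (r : ℝ) (n : ℕ) : ℝ :=
  sInf {e : ℝ | ∃ α : Finset E, 1 ≤ α.card ∧ α.card ≤ n ∧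
    e = (∫ x, infDist x (↑α : Set E) ^ r ∂P) ^ (1 / r)}

/-- The upper quantization dimension of order `r`. -/
noncomputable def upperQuantDim {E : Type*} [MetricSpace E] [MeasurableSpace E]
    (P : Measure E) (r : ℝ) : ℝ :=
  limsup (fun n : ℕ => Real.log n / (- Real.log (quantError P r n))) atTop

/-- The lower quantization dimension of order `r`. -/
noncomputable def lowerQuantDim {E : Type*} [MetricSpace E] [MeasurableSpace E]
    (P : Measure E) (r : ℝ) : ℝ :=
  liminf (fun n : ℕ => Real.log n / (- Real.log (quantError P r n))) atTop

/-- The `s`-dimensional upper quantization coefficient of order `r`. -/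
noncomputable def upperQuantCoeff {E : Type*} [MetricSpace E] [MeasurableSpace E]
    (P : Measure E) (r s : ℝ) : ℝ≥0∞ :=
  limsup (fun n : ℕ => ENNReal.ofReal ((n : ℝ) ^ (1 / s) * quantError P r n)) atTop

/-- The `s`-dimensional lower quantization coefficient of order `r`. -/
noncomputable def lowerQuantCoeff {E : Type*} [MetricSpace E] [MeasurableSpace E]
    (P : Measure E) (r s : ℝ) : ℝ≥0∞ :=
  liminf (fun n : ℕ => ENNReal.ofReal ((n : ℝ) ^ (1 / s) * quantError P r n)) atTop

/-- The upper quantization dimension of order `r`, as an extended nonnegative real. -/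
noncomputable def upperQuantDimE {E : Type*} [MetricSpace E] [MeasurableSpace E]
    (P : Measure E) (r : ℝ) : ℝ≥0∞ :=
  limsup (fun n : ℕ => ENNReal.ofReal (Real.log n / (- Real.log (quantError P r n)))) atTop

/-- `N(A,ε)`: the minimal number of closed balls of radius `ε` needed to cover `A`. -/
noncomputable def coverNum {E : Type*} [MetricSpace E] (A : Set E) (ε : ℝ) : ℕ :=
  sInf {n : ℕ | ∃ t : Finset E, t.card ≤ n ∧ A ⊆ ⋃ x ∈ t, closedBall x ε}

/-- The upper box dimension `limsup_{ε→0⁺} log N(A,ε)/(-log ε)`, as an extended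
nonnegative real. -/
noncomputable def upperBoxDimE {E : Type*} [MetricSpace E] (A : Set E) : ℝ≥0∞ :=
  limsup (fun ε : ℝ => ENNReal.ofReal (Real.log (coverNum A ε) / (- Real.log ε)))
    (nhdsWithin 0 (Set.Ioi 0))

/-- The packing dimension of a set:
`dim_P E = inf { sup_i upperBoxDim (A i) : E ⊆ ⋃ i A i, each A i bounded }`. -/
noncomputable def packingDim {E : Type*} [MetricSpace E] (F : Set E) : ℝ≥0∞ :=
  sInf {d : ℝ≥0∞ | ∃ A : ℕ → Set E, (∀ i, Bornology.IsBounded (A i)) ∧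
    F ⊆ ⋃ i, A i ∧ d = ⨆ i, upperBoxDimE (A i)}

/-- The packing dimension of a measure: `dim_P^* μ = inf { dim_P A : A Borel, μ(A) = 1 }`. -/
noncomputable def packingDimMeasure {E : Type*} [MetricSpace E] [MeasurableSpace E]
    (μ : Measure E) : ℝ≥0∞ :=
  sInf {d : ℝ≥0∞ | ∃ A : Set E, MeasurableSet A ∧ μ A = 1 ∧ d = packingDim A}

section Aux9

variable {q : ℕ}

noncomputable def pt (hq : 0 < q) (k : ℕ) : EuclideanSpace ℝ (Fin q) :=
  (1 / (2 * ((k : ℝ) + 1))) • EuclideanSpace.single ⟨0, hq⟩ (1 : ℝ)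

lemma dist_pt (hq : 0 < q) (j k : ℕ) :
    dist (pt hq j) (pt hq k) = |1 / (2 * ((j:ℝ)+1)) - 1 / (2 * ((k:ℝ)+1))| := by
  rw [dist_eq_norm, pt, pt, ← sub_smul, norm_smul, EuclideanSpace.norm_single]
  simp [Real.norm_eq_abs]

lemma norm_pt (hq : 0 < q) (k : ℕ) : ‖pt hq k‖ ≤ 1/2 := by
  rw [pt, norm_smul, EuclideanSpace.norm_single]
  have hk : (0:ℝ) < (k:ℝ) + 1 := by positivity
  rw [Real.norm_eq_abs, norm_one, mul_one, abs_of_pos (by positivity)]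
  rw [div_le_div_iff₀ (by positivity) (by norm_num)]
  nlinarith [Nat.cast_nonneg (α := ℝ) k]

noncomputable def pmass (k : ℕ) : ℝ := 1 / (((k:ℝ) + 1) * ((k:ℝ) + 2))

lemma pmass_pos (k : ℕ) : 0 < pmass k := by
  have : (0:ℝ) ≤ (k:ℝ) := Nat.cast_nonneg k
  unfold pmass; positivity

lemma hasSum_pmass : HasSum pmass 1 := by
  rw [hasSum_iff_tendsto_nat_of_nonneg (fun i => (pmass_pos i).le)]
  have h : ∀ n : ℕ, ∑ i ∈ Finset.range n, pmass i = 1 - 1/((n:ℝ)+1) := by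
    intro n
    have h2 : ∑ i ∈ Finset.range n, pmass i
        = ∑ i ∈ Finset.range n, (1/((i:ℝ)+1) - 1/(((i+1:ℕ):ℝ)+1)) := by
      apply Finset.sum_congr rfl
      intro i _
      have h1 : ((i:ℝ)+1) ≠ 0 := by positivity
      have h1' : ((i:ℝ)+2) ≠ 0 := by positivity
      unfold pmass
      push_cast
      field_simp
      ring
    rw [h2, Finset.sum_range_sub' (f := fun i : ℕ => 1/((i:ℝ)+1)) n]
    norm_num
  simp only [h]
  have : Tendsto (fun n : ℕ => 1/((n:ℝ)+1)) atTop (nhds 0) :=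
    tendsto_one_div_add_atTop_nhds_zero_nat
  simpa using tendsto_const_nhds.sub this

noncomputable def myMeasure (hq : 0 < q) : Measure (EuclideanSpace ℝ (Fin q)) :=
  Measure.sum (fun k => ENNReal.ofReal (pmass k) • Measure.dirac (pt hq k))

lemma myMeasure_apply (hq : 0 < q) {s : Set (EuclideanSpace ℝ (Fin q))} (hs : MeasurableSet s) :
    myMeasure hq s = ∑' k, ENNReal.ofReal (pmass k) * Measure.dirac (pt hq k) s := by
  rw [myMeasure, Measure.sum_apply _ hs]; rfl

instance isProb_myMeasure (hq : 0 < q) : IsProbabilityMeasure (myMeasure hq) := by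
  constructor
  rw [myMeasure_apply hq MeasurableSet.univ]
  simp only [measure_univ, mul_one]
  rw [← ENNReal.ofReal_tsum_of_nonneg (fun k => (pmass_pos k).le) hasSum_pmass.summable,
    hasSum_pmass.tsum_eq, ENNReal.ofReal_one]

lemma myMeasure_compl_zero (hq : 0 < q) {s : Set (EuclideanSpace ℝ (Fin q))}
    (hs : MeasurableSet s) (h : ∀ k, pt hq k ∈ s) : myMeasure hq sᶜ = 0 := by
  rw [myMeasure_apply hq hs.compl]
  have : ∀ k, Measure.dirac (pt hq k) sᶜ = 0 := by
    intro k
    rw [Measure.dirac_apply' _ hs.compl, Set.indicator_of_notMem (by simp [h k])]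
  simp [this]

lemma ae_range (hq : 0 < q) : ∀ᵐ x ∂(myMeasure hq), x ∈ Set.range (pt hq) := by
  rw [ae_iff]
  have : {x | ¬ x ∈ Set.range (pt hq)} = (Set.range (pt hq))ᶜ := rfl
  rw [this]
  exact myMeasure_compl_zero hq (Set.countable_range _).measurableSet
    (fun k => Set.mem_range_self k)

lemma integral_myMeasure (hq : 0 < q) (f : EuclideanSpace ℝ (Fin q) → ℝ)
    (hf : Integrable f (myMeasure hq)) :
    ∫ x, f x ∂(myMeasure hq) = ∑' k, pmass k * f (pt hq k) := by
  rw [myMeasure] at hf ⊢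
  rw [integral_sum_measure hf]
  congr 1; ext k
  rw [integral_smul_measure, integral_dirac, ENNReal.toReal_ofReal (pmass_pos k).le,
    smul_eq_mul]

lemma continuous_infDist_rpow {r : ℝ} (hr : 0 < r) (s : Set (EuclideanSpace ℝ (Fin q))) :
    Continuous fun x : EuclideanSpace ℝ (Fin q) => infDist x s ^ r := by
  rw [continuous_iff_continuousAt]
  intro x
  exact (Real.continuousAt_rpow_const _ r (Or.inr hr.le)).comp
    (continuous_infDist_pt _).continuousAt

lemma integrable_infDist_rpow (hq : 0 < q) {r : ℝ} (hr : 0 < r)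
    (α : Finset (EuclideanSpace ℝ (Fin q))) (hα : α.Nonempty) :
    Integrable (fun x => infDist x (α : Set _) ^ r) (myMeasure hq) := by
  obtain ⟨a, ha⟩ := hα
  apply Integrable.mono' (integrable_const ((1/2 + ‖a‖) ^ r))
    (continuous_infDist_rpow hr _).aestronglyMeasurable
  filter_upwards [ae_range hq] with x hx
  obtain ⟨k, rfl⟩ := hx
  rw [Real.norm_eq_abs, abs_of_nonneg (Real.rpow_nonneg infDist_nonneg r)]
  apply Real.rpow_le_rpow infDist_nonneg _ hr.le
  calc infDist (pt hq k) (α : Set _) ≤ dist (pt hq k) a := infDist_le_dist_of_mem ha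
    _ ≤ ‖pt hq k‖ + ‖a‖ := dist_le_norm_add_norm _ _
    _ ≤ 1/2 + ‖a‖ := by linarith [norm_pt hq k]

lemma quantError_nonneg {E : Type*} [MetricSpace E] [MeasurableSpace E]
    (P : Measure E) (r : ℝ) (n : ℕ) : 0 ≤ quantError P r n := by
  apply Real.sInf_nonneg
  rintro e ⟨α, -, -, rfl⟩
  exact Real.rpow_nonneg (integral_nonneg fun x => Real.rpow_nonneg infDist_nonneg r) _

lemma quantError_bddBelow {E : Type*} [MetricSpace E] [MeasurableSpace E]
    (P : Measure E) (r : ℝ) (n : ℕ) :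
    BddBelow {e : ℝ | ∃ α : Finset E, 1 ≤ α.card ∧ α.card ≤ n ∧
      e = (∫ x, infDist x (↑α : Set E) ^ r ∂P) ^ (1 / r)} := by
  refine ⟨0, ?_⟩
  rintro e ⟨α, -, -, rfl⟩
  exact Real.rpow_nonneg (integral_nonneg fun x => Real.rpow_nonneg infDist_nonneg r) _

lemma quantError_le_half (hq : 0 < q) {r : ℝ} (hr : 1 ≤ r) {n : ℕ} (hn : 1 ≤ n) :
    quantError (myMeasure hq) r n ≤ 1/2 := by
  have hr0 : (0:ℝ) < r := lt_of_lt_of_le one_pos hr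
  set α : Finset (EuclideanSpace ℝ (Fin q)) := {0} with hα
  have hmem : (∫ x, infDist x (↑α : Set _) ^ r ∂(myMeasure hq)) ^ (1 / r) ∈
      {e : ℝ | ∃ β : Finset (EuclideanSpace ℝ (Fin q)), 1 ≤ β.card ∧ β.card ≤ n ∧
        e = (∫ x, infDist x (↑β : Set _) ^ r ∂(myMeasure hq)) ^ (1 / r)} :=
    ⟨α, by simp [hα], by simpa [hα] using hn, rfl⟩
  refine le_trans (csInf_le (quantError_bddBelow _ _ _) hmem) ?_
  have hint : (∫ x, infDist x (↑α : Set _) ^ r ∂(myMeasure hq)) ≤ (1/2) ^ r := by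
    rw [integral_myMeasure hq _ (integrable_infDist_rpow hq hr0 α ⟨0, by simp [hα]⟩)]
    have hsummR : Summable (fun k => pmass k * (1/2:ℝ) ^ r) :=
      hasSum_pmass.summable.mul_right _
    have hle : ∀ k, pmass k * infDist (pt hq k) (↑α : Set _) ^ r
        ≤ pmass k * (1/2:ℝ) ^ r := by
      intro k
      apply mul_le_mul_of_nonneg_left _ (pmass_pos k).le
      apply Real.rpow_le_rpow infDist_nonneg _ hr0.le
      have : infDist (pt hq k) (↑α : Set _) = dist (pt hq k) 0 := by
        simp [hα, infDist_singleton]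
      rw [this, dist_zero_right]
      exact norm_pt hq k
    have hsummL : Summable (fun k => pmass k * infDist (pt hq k) (↑α : Set _) ^ r) :=
      Summable.of_nonneg_of_le
        (fun k => mul_nonneg (pmass_pos k).le (Real.rpow_nonneg infDist_nonneg r))
        hle hsummR
    calc ∑' k, pmass k * infDist (pt hq k) (↑α : Set _) ^ r
        ≤ ∑' k, pmass k * (1/2:ℝ) ^ r := Summable.tsum_le_tsum hle hsummL hsummR
      _ = (1/2:ℝ) ^ r := by rw [tsum_mul_right, hasSum_pmass.tsum_eq, one_mul]
  calc (∫ x, infDist x (↑α : Set _) ^ r ∂(myMeasure hq)) ^ (1 / r)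
      ≤ ((1/2:ℝ) ^ r) ^ (1/r) := Real.rpow_le_rpow
        (integral_nonneg fun x => Real.rpow_nonneg infDist_nonneg r) hint (by positivity)
    _ = 1/2 := by
        rw [← Real.rpow_mul (by norm_num), mul_one_div_cancel hr0.ne', Real.rpow_one]

lemma pt_gap_aux (hq : 0 < q) {n j k : ℕ} (hn : 1 ≤ n) (hj : j ∈ Finset.Ico n (3*n))
    (hk : k ∈ Finset.Ico n (3*n)) (hjk : j < k) :
    1/(24*(n:ℝ)^2) ≤ dist (pt hq j) (pt hq k) := by
  rw [dist_pt]
  obtain ⟨-, hj2⟩ := Finset.mem_Ico.mp hj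
  have hN : (1:ℝ) ≤ (n:ℝ) := by exact_mod_cast hn
  have hJ3 : ((j:ℝ) + 1) ≤ 3*(n:ℝ) := by
    have : j + 1 ≤ 3*n := hj2
    exact_mod_cast this
  have hJK : ((j:ℝ) + 2) ≤ (k:ℝ) + 1 := by
    have : j + 2 ≤ k + 1 := by omega
    exact_mod_cast this
  have hJ0 : (0:ℝ) < (j:ℝ) + 1 := by positivity
  have hJ0' : (0:ℝ) < (j:ℝ) + 2 := by positivity
  have hK0 : (0:ℝ) < (k:ℝ) + 1 := by positivity
  have h1 : 1/(2*((k:ℝ)+1)) ≤ 1/(2*((j:ℝ)+2)) :=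
    one_div_le_one_div_of_le (by positivity) (by linarith)
  have h2 : 1/(2*((j:ℝ)+2)) ≤ 1/(2*((j:ℝ)+1)) :=
    one_div_le_one_div_of_le (by positivity) (by linarith)
  rw [abs_of_nonneg (by linarith)]
  have key : 1/(2*((j:ℝ)+1)) - 1/(2*((j:ℝ)+2)) = 1/(2*((j:ℝ)+1)*((j:ℝ)+2)) := by
    field_simp
    ring
  have h3 : 1/(24*(n:ℝ)^2) ≤ 1/(2*((j:ℝ)+1)*((j:ℝ)+2)) := by
    apply one_div_le_one_div_of_le (by positivity)
    nlinarith
  linarith [key ▸ h3]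

lemma pt_gap (hq : 0 < q) {n j k : ℕ} (hn : 1 ≤ n) (hj : j ∈ Finset.Ico n (3*n))
    (hk : k ∈ Finset.Ico n (3*n)) (hjk : j ≠ k) :
    1/(24*(n:ℝ)^2) ≤ dist (pt hq j) (pt hq k) := by
  rcases lt_or_gt_of_ne hjk with h | h
  · exact pt_gap_aux hq hn hj hk h
  · rw [dist_comm]; exact pt_gap_aux hq hn hk hj h

noncomputable def Lo (r : ℝ) (n : ℕ) : ℝ := (1/(16*(n:ℝ))) * (1/(48*(n:ℝ)^2)) ^ r

lemma Lo_pos {r : ℝ} {n : ℕ} (hn : 1 ≤ n) : 0 < Lo r n := by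
  have hN : (0:ℝ) < (n:ℝ) := by exact_mod_cast hn
  have h1 : (0:ℝ) < 1/(48*(n:ℝ)^2) := by positivity
  have := Real.rpow_pos_of_pos h1 r
  unfold Lo
  positivity

lemma quantError_ge (hq : 0 < q) {r : ℝ} (hr : 1 ≤ r) {n : ℕ} (hn : 1 ≤ n) :
    (Lo r n) ^ (1/r) ≤ quantError (myMeasure hq) r n := by
  have hr0 : (0:ℝ) < r := lt_of_lt_of_le one_pos hr
  have hN : (1:ℝ) ≤ (n:ℝ) := by exact_mod_cast hn
  have hN0 : (0:ℝ) < (n:ℝ) := by linarith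
  set δ : ℝ := 1/(48*(n:ℝ)^2) with hδ
  have hδ0 : 0 < δ := by positivity
  apply le_csInf
  · exact ⟨_, ⟨({0} : Finset (EuclideanSpace ℝ (Fin q))), by simp, by simpa using hn, rfl⟩⟩
  rintro e ⟨α, hα1, hα2, rfl⟩
  have hαne : α.Nonempty := Finset.card_pos.mp hα1
  have hαne' : (↑α : Set (EuclideanSpace ℝ (Fin q))).Nonempty := by
    obtain ⟨a, ha⟩ := hαne; exact ⟨a, ha⟩
  apply Real.rpow_le_rpow (Lo_pos hn).le _ (by positivity)
  -- the key integral lower bound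
  rw [integral_myMeasure hq _ (integrable_infDist_rpow hq hr0 α hαne)]
  set W : Finset ℕ := Finset.Ico n (3*n) with hW
  set S : Finset ℕ := W.filter (fun k => infDist (pt hq k) (↑α : Set _) < δ) with hS
  -- S has at most n elements
  have hScard : S.card ≤ n := by
    classical
    refine le_trans (Finset.card_le_card_of_injOn
      (fun k => if h : ∃ a ∈ α, dist (pt hq k) a < δ then h.choose else 0) ?_ ?_) hα2
    · intro k hk
      have hlt : infDist (pt hq k) (↑α : Set _) < δ := (Finset.mem_filter.mp hk).2
      have hex : ∃ a ∈ α, dist (pt hq k) a < δ := by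
        obtain ⟨a, ha, hd⟩ := (infDist_lt_iff hαne').mp hlt
        exact ⟨a, ha, hd⟩
      simp only [dif_pos hex]
      exact hex.choose_spec.1
    · intro k1 hk1 k2 hk2 hfeq
      by_contra hne
      have hex1 : ∃ a ∈ α, dist (pt hq k1) a < δ := by
        obtain ⟨a, ha, hd⟩ := (infDist_lt_iff hαne').mp (Finset.mem_filter.mp hk1).2
        exact ⟨a, ha, hd⟩
      have hex2 : ∃ a ∈ α, dist (pt hq k2) a < δ := by
        obtain ⟨a, ha, hd⟩ := (infDist_lt_iff hαne').mp (Finset.mem_filter.mp hk2).2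
        exact ⟨a, ha, hd⟩
      simp only [dif_pos hex1, dif_pos hex2] at hfeq
      have hd1 := hex1.choose_spec.2
      have hd2 := hex2.choose_spec.2
      have hgap := pt_gap hq hn (Finset.mem_filter.mp hk1).1 (Finset.mem_filter.mp hk2).1 hne
      have : dist (pt hq k1) (pt hq k2)
          ≤ dist (pt hq k1) hex1.choose + dist hex2.choose (pt hq k2) := by
        rw [hfeq]; exact dist_triangle _ _ _
      rw [dist_comm hex2.choose] at this
      have h2δ : 2 * δ = 1/(24*(n:ℝ)^2) := by rw [hδ]; field_simp; ring
      linarith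
  set T : Finset ℕ := W \ S with hT
  have hTcard : n ≤ T.card := by
    have hsub : S ⊆ W := Finset.filter_subset _ _
    have : T.card = W.card - S.card := Finset.card_sdiff_of_subset hsub
    have hWcard : W.card = 2*n := by rw [hW, Nat.card_Ico]; omega
    omega
  -- each term in T is at least b
  set b : ℝ := (1/(16*(n:ℝ)^2)) * δ ^ r with hb
  have hδr0 : 0 < δ ^ r := Real.rpow_pos_of_pos hδ0 r
  have hb0 : 0 < b := by positivity
  have h_each : ∀ k ∈ T, b ≤ pmass k * infDist (pt hq k) (↑α : Set _) ^ r := by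
    intro k hk
    obtain ⟨hkW, hkS⟩ := Finset.mem_sdiff.mp hk
    have hkIco := Finset.mem_Ico.mp hkW
    have hinf : δ ≤ infDist (pt hq k) (↑α : Set _) := by
      by_contra h
      exact hkS (Finset.mem_filter.mpr ⟨hkW, by linarith⟩)
    have hp : 1/(16*(n:ℝ)^2) ≤ pmass k := by
      unfold pmass
      apply one_div_le_one_div_of_le (by positivity)
      have hk3 : ((k:ℝ)+1) ≤ 3*(n:ℝ) := by
        have : k + 1 ≤ 3*n := hkIco.2
        exact_mod_cast this
      nlinarith
    have hfr : δ ^ r ≤ infDist (pt hq k) (↑α : Set _) ^ r :=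
      Real.rpow_le_rpow hδ0.le hinf hr0.le
    calc b ≤ pmass k * δ ^ r := by
          apply mul_le_mul_of_nonneg_right hp hδr0.le
      _ ≤ pmass k * infDist (pt hq k) (↑α : Set _) ^ r :=
          mul_le_mul_of_nonneg_left hfr (pmass_pos k).le
  -- summability
  obtain ⟨a, ha⟩ := hαne
  have hsummR : Summable (fun k => pmass k * ((1/2 + ‖a‖) ^ r : ℝ)) :=
    hasSum_pmass.summable.mul_right _
  have hptle : ∀ k, infDist (pt hq k) (↑α : Set _) ^ r ≤ (1/2 + ‖a‖) ^ r := by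
    intro k
    apply Real.rpow_le_rpow infDist_nonneg _ hr0.le
    calc infDist (pt hq k) (↑α : Set _) ≤ dist (pt hq k) a := infDist_le_dist_of_mem ha
      _ ≤ ‖pt hq k‖ + ‖a‖ := dist_le_norm_add_norm _ _
      _ ≤ 1/2 + ‖a‖ := by linarith [norm_pt hq k]
  have hsumm : Summable (fun k => pmass k * infDist (pt hq k) (↑α : Set _) ^ r) :=
    Summable.of_nonneg_of_le
      (fun k => mul_nonneg (pmass_pos k).le (Real.rpow_nonneg infDist_nonneg r))
      (fun k => mul_le_mul_of_nonneg_left (hptle k) (pmass_pos k).le) hsummR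
  -- conclude
  calc Lo r n = (n:ℝ) * b := by rw [hb, Lo, hδ]; field_simp
    _ ≤ (T.card : ℝ) * b := by
        apply mul_le_mul_of_nonneg_right _ hb0.le
        exact_mod_cast hTcard
    _ ≤ ∑ k ∈ T, pmass k * infDist (pt hq k) (↑α : Set _) ^ r := by
        have := Finset.card_nsmul_le_sum T _ b h_each
        rwa [nsmul_eq_mul] at this
    _ ≤ ∑' k, pmass k * infDist (pt hq k) (↑α : Set _) ^ r :=
        Summable.sum_le_tsum T (fun k _ =>
          mul_nonneg (pmass_pos k).le (Real.rpow_nonneg infDist_nonneg r)) hsumm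

lemma upperBoxDimE_singleton {E : Type*} [MetricSpace E] (a : E) :
    upperBoxDimE ({a} : Set E) = 0 := by
  have h : ∀ ε : ℝ, 0 < ε → coverNum ({a} : Set E) ε ≤ 1 := by
    intro ε hε
    apply Nat.sInf_le
    exact ⟨{a}, by simp, by simp [hε.le]⟩
  have h0 : ∀ᶠ ε : ℝ in nhdsWithin 0 (Set.Ioi 0),
      ENNReal.ofReal (Real.log (coverNum ({a} : Set E) ε) / (- Real.log ε)) = 0 := by
    filter_upwards [self_mem_nhdsWithin] with ε hε
    have := h ε hε
    interval_cases h' : coverNum ({a} : Set E) ε <;> simp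
  rw [upperBoxDimE, limsup_congr h0]
  exact limsup_const 0

lemma packingDimMeasure_myMeasure (hq : 0 < q) : packingDimMeasure (myMeasure hq) = 0 := by
  have hpd : packingDim (Set.range (pt hq)) = 0 := by
    rw [← le_zero_iff]
    apply sInf_le
    refine ⟨fun i => {pt hq i}, fun i => Bornology.isBounded_singleton, ?_, ?_⟩
    · rintro x ⟨k, rfl⟩
      exact Set.mem_iUnion.mpr ⟨k, rfl⟩
    · simp [upperBoxDimE_singleton]
  rw [← le_zero_iff]
  apply sInf_le
  refine ⟨Set.range (pt hq), (Set.countable_range _).measurableSet, ?_, hpd.symm⟩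
  rw [← prob_compl_eq_zero_iff (Set.countable_range _).measurableSet]
  exact myMeasure_compl_zero hq (Set.countable_range _).measurableSet
    (fun k => Set.mem_range_self k)

lemma quantDim_lower (hq : 0 < q) {r : ℝ} (hr : 1 ≤ r) :
    ENNReal.ofReal (1/4) ≤ upperQuantDimE (myMeasure hq) r := by
  have hr0 : (0:ℝ) < r := lt_of_lt_of_le one_pos hr
  have hev : ∀ᶠ n : ℕ in atTop, ENNReal.ofReal (1/4) ≤
      ENNReal.ofReal (Real.log n / (- Real.log (quantError (myMeasure hq) r n))) := by
    filter_upwards [eventually_ge_atTop 768] with n hn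
    have hn1 : 1 ≤ n := le_trans (by norm_num) hn
    have hN : (1:ℝ) ≤ (n:ℝ) := by exact_mod_cast hn1
    have hN0 : (0:ℝ) < (n:ℝ) := by linarith
    set en := quantError (myMeasure hq) r n with hen
    have h1 : (Lo r n) ^ (1/r) ≤ en := quantError_ge hq hr hn1
    have h2 : en ≤ 1/2 := quantError_le_half hq hr hn1
    have hLo := Lo_pos (r := r) hn1
    have hε0 : 0 < (Lo r n) ^ (1/r) := Real.rpow_pos_of_pos hLo _
    have hen0 : 0 < en := lt_of_lt_of_le hε0 h1
    have hlog2 : Real.log 2 ≤ - Real.log en := by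
      have : Real.log en ≤ Real.log (1/2) := Real.log_le_log hen0 h2
      rw [one_div, Real.log_inv] at this
      linarith
    have hlog2pos : (0:ℝ) < Real.log 2 := Real.log_pos (by norm_num)
    have hlogn0 : 0 ≤ Real.log (n:ℝ) := Real.log_nonneg hN
    have hup : - Real.log en ≤ 4 * Real.log (n:ℝ) := by
      have hmono : Real.log ((Lo r n) ^ (1/r)) ≤ Real.log en := Real.log_le_log hε0 h1
      have hLoeq : Real.log (Lo r n)
          = -(Real.log 16 + Real.log (n:ℝ)) + r * (-(Real.log 48 + 2 * Real.log (n:ℝ))) := by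
        rw [Lo, Real.log_mul (by positivity) (by positivity : ((1/(48*(n:ℝ)^2)) ^ r) ≠ 0),
          Real.log_rpow (by positivity)]
        rw [one_div, one_div, Real.log_inv, Real.log_inv,
          Real.log_mul (by norm_num) hN0.ne', Real.log_mul (by norm_num) (by positivity),
          Real.log_pow]
        push_cast
        ring
      have hrpow : Real.log ((Lo r n) ^ (1/r)) = (1/r) * Real.log (Lo r n) :=
        Real.log_rpow hLo _
      have h1r : (1/r) * (Real.log 16 + Real.log (n:ℝ)) ≤ Real.log 16 + Real.log (n:ℝ) := by
        have h16 : (0:ℝ) < Real.log 16 := Real.log_pos (by norm_num)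
        have : (1/r) ≤ 1 := by
          rw [div_le_one hr0]; exact hr
        nlinarith
      have h768 : Real.log 16 + Real.log 48 ≤ Real.log (n:ℝ) := by
        rw [← Real.log_mul (by norm_num) (by norm_num)]
        have h16 : ((16:ℝ) * 48) = 768 := by norm_num
        rw [h16]
        exact Real.log_le_log (by norm_num) (by exact_mod_cast hn)
      have hkey : - Real.log en ≤ - Real.log ((Lo r n) ^ (1/r)) := by linarith
      rw [hrpow, hLoeq] at hkey
      have hexp : (1/r) * (-(Real.log 16 + Real.log (n:ℝ))
          + r * (-(Real.log 48 + 2 * Real.log (n:ℝ))))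
          = -((1/r) * (Real.log 16 + Real.log (n:ℝ))) - (Real.log 48 + 2*Real.log (n:ℝ)) := by
        field_simp
        ring
      rw [hexp, neg_sub_left, neg_neg] at hkey
      have h48 : Real.log 48 ≤ Real.log (n:ℝ) := by
        have h16 : (0:ℝ) < Real.log 16 := Real.log_pos (by norm_num)
        linarith
      linarith
    apply ENNReal.ofReal_le_ofReal
    rw [le_div_iff₀ (by linarith : (0:ℝ) < - Real.log en)]
    linarith
  have hconst : limsup (fun _ : ℕ => ENNReal.ofReal (1/4)) atTop
      = ENNReal.ofReal (1/4) := limsup_const _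
  rw [upperQuantDimE, ← hconst]
  exact limsup_le_limsup hev

end Aux9

/-- for every `r ∈ [1,∞)` (and `q ≥ 1`) there exists a compactly supported
Borel probability measure `μ` on `ℝ^q` whose upper quantization dimension of order `r`
differs from the packing dimension of `μ`. -/
theorem exists_upperQuantDim_ne_packingDimMeasure (q : ℕ) (hq : 0 < q) (r : ℝ) (hr : 1 ≤ r) :
    ∃ μ : Measure (EuclideanSpace ℝ (Fin q)), IsProbabilityMeasure μ ∧
      (∃ K : Set (EuclideanSpace ℝ (Fin q)), IsCompact K ∧ μ Kᶜ = 0) ∧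
      upperQuantDimE μ r ≠ packingDimMeasure μ := by
  refine ⟨myMeasure hq, isProb_myMeasure hq,
    ⟨closedBall 0 1, isCompact_closedBall _ _, ?_⟩, ?_⟩
  · apply myMeasure_compl_zero hq measurableSet_closedBall
    intro k
    rw [mem_closedBall_zero_iff]
    linarith [norm_pt hq k]
  · rw [packingDimMeasure_myMeasure hq]
    intro h
    have h2 := quantDim_lower hq hr
    rw [h, le_zero_iff, ENNReal.ofReal_eq_zero] at h2
    norm_num at h2
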